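/- Let X be a circle-module over k. Then for every integer n there is an isomorphism of k-vector spaces H^n(X[[t,θ]]) ≅ H^n(X[[t]]) ⊕ H^{n−1}(X[[t]]). (This is the mod-p Z/p-Gysin decomposition: the cohomology of the Z/p-homotopy-fixed-point model of a complex with circle action splits into two copies of the cohomology of its S^1-homotopy-fixed-point model, one shifted down by one degree; it is the chain-level content of Proposition 1.5 of the paper.) -/

import Mathlib

/-!
Common setup: circle-modules over a field `k` of characteristic `p`, and the explicit
homotopy-fixed-point complexes `X[[t]]`, `X[[t,θ]]`, `X[[t]]⟨1,θ⟩` together with the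
`ℤ/p`-Gysin comparison map `φ_p`.
-/

variable {k : Type} [Field k] {p : ℕ}

/-- The sign `(-1)^n` as an element of `k`. -/
def sgn (k : Type) [Field k] (n : ℤ) : k := if Even n then 1 else -1

/-- Cast along an equality of degrees. -/
def gcast (X : ℤ → ModuleCat k) {m n : ℤ} (h : m = n) : X m →ₗ[k] X n := by
  subst h; exact LinearMap.id

/-- A circle-module over `k`: a `ℤ`-graded cochain complex of `k`-vector spaces with a
degree-`0` chain automorphism `τ` satisfying `τ^p = 1`, and a degree-`(-1)` operator `σ`
satisfying `σ∘σ = 0`, `σ∘τ = τ∘σ` and `d∘σ + σ∘d = τ - 1`; i.e. a dg-module over the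
dg-algebra `k[τ,σ]/(τ^p = 1, σ² = 0, τσ = στ)` with `dσ = τ - 1`. -/
structure CircleModule (k : Type) [Field k] (p : ℕ) where
  X : ℤ → ModuleCat k
  d : ∀ n : ℤ, X n →ₗ[k] X (n + 1)
  tau : ∀ n : ℤ, X n →ₗ[k] X n
  sigma : ∀ n : ℤ, X n →ₗ[k] X (n - 1)
  d_comp_d : ∀ n : ℤ, (d (n + 1)).comp (d n) = 0
  d_comm_tau : ∀ n : ℤ, (d n).comp (tau n) = (tau (n + 1)).comp (d n)
  tau_pow_eq_one : ∀ n : ℤ, (tau n : Module.End k (X n)) ^ p = 1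
  sigma_comp_sigma : ∀ n : ℤ, (sigma (n - 1)).comp (sigma n) = 0
  sigma_comm_tau : ∀ n : ℤ, (sigma n).comp (tau n) = (tau (n - 1)).comp (sigma n)
  d_sigma_homotopy : ∀ n : ℤ,
    (gcast X (show n - 1 + 1 = n by omega)).comp ((d (n - 1)).comp (sigma n))
      + (gcast X (show n + 1 - 1 = n by omega)).comp ((sigma (n + 1)).comp (d n))
      = tau n - LinearMap.id

/-- The norm operator `N = 1 + τ + τ² + ⋯ + τ^{p-1}`. -/
def Nop (M : CircleModule k p) (n : ℤ) : M.X n →ₗ[k] M.X n :=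
  (∑ i ∈ Finset.range p, (M.tau n : Module.End k (M.X n)) ^ i : Module.End k (M.X n))

/-- The operator `(τ - 1)^m`. -/
def tauSubOnePow (M : CircleModule k p) (n : ℤ) (m : ℕ) : M.X n →ₗ[k] M.X n :=
  ((M.tau n - 1 : Module.End k (M.X n)) ^ m : Module.End k (M.X n))

/-- Degree-`n` part of the `S¹`-homotopy-fixed-point model `X[[t]]`:
`∏_{j ≥ 0} X^{n-2j}` (the coefficient of `t^j` lies in `X^{n-2j}`). -/
abbrev FixT (M : CircleModule k p) (n : ℤ) : Type :=
  (j : ℕ) → M.X (n - 2 * (j : ℤ))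

/-- Degree-`n` part of the `ℤ/p`-homotopy-fixed-point model `X[[t,θ]]`:
`(∏_{j ≥ 0} X^{n-2j}) × (∏_{j ≥ 0} X^{n-1-2j})` (coefficients of `t^j` and of `t^j θ`). -/
abbrev FixTheta (M : CircleModule k p) (n : ℤ) : Type :=
  FixT M n × FixT M (n - 1)

/-- Degree-`n` part of `X[[t]]⟨1,θ⟩ = X[[t]] ⊕ X[[t]]·θ`. -/
abbrev FixShift (M : CircleModule k p) (n : ℤ) : Type :=
  FixT M n × FixT M (n - 1)

/-- The differential of `X[[t]]`: the `t`-linear map determined by `x ↦ dx + N(σ(x))·t`. -/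
def fixTDiff (M : CircleModule k p) (n : ℤ) : FixT M n →ₗ[k] FixT M (n + 1) :=
  LinearMap.pi fun j =>
    (gcast M.X (show n - 2 * (j : ℤ) + 1 = n + 1 - 2 * (j : ℤ) by omega)).comp
        ((M.d (n - 2 * (j : ℤ))).comp (LinearMap.proj j))
    + if h : j = 0 then 0 else
        (gcast M.X (show n - 2 * ((j - 1 : ℕ) : ℤ) - 1 = n + 1 - 2 * (j : ℤ) by omega)).comp
          ((Nop M (n - 2 * ((j - 1 : ℕ) : ℤ) - 1)).comp
            ((M.sigma (n - 2 * ((j - 1 : ℕ) : ℤ))).comp (LinearMap.proj (j - 1))))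

/-- The differential of `X[[t,θ]]`: the `t`-linear map determined on homogeneous `x ∈ X` by
`x ↦ dx + (-1)^{|x|}(τ - 1)(x)·θ` and `x·θ ↦ (dx)·θ + (-1)^{|x|} N(x)·t`. -/
def fixThetaDiff (M : CircleModule k p) (n : ℤ) : FixTheta M n →ₗ[k] FixTheta M (n + 1) :=
  LinearMap.prod
    (LinearMap.pi fun j =>
      (gcast M.X (show n - 2 * (j : ℤ) + 1 = n + 1 - 2 * (j : ℤ) by omega)).comp
          ((M.d (n - 2 * (j : ℤ))).comp
            ((LinearMap.proj j).comp (LinearMap.fst k (FixT M n) (FixT M (n - 1)))))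
      + if h : j = 0 then 0 else
          sgn k (n + 1) •
            (gcast M.X
                (show n - 1 - 2 * ((j - 1 : ℕ) : ℤ) = n + 1 - 2 * (j : ℤ) by omega)).comp
              ((Nop M (n - 1 - 2 * ((j - 1 : ℕ) : ℤ))).comp
                ((LinearMap.proj (j - 1)).comp (LinearMap.snd k (FixT M n) (FixT M (n - 1))))))
    (LinearMap.pi fun j =>
      (gcast M.X (show n - 1 - 2 * (j : ℤ) + 1 = n + 1 - 1 - 2 * (j : ℤ) by omega)).comp
          ((M.d (n - 1 - 2 * (j : ℤ))).comp
            ((LinearMap.proj j).comp (LinearMap.snd k (FixT M n) (FixT M (n - 1)))))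
      + sgn k n •
          (gcast M.X (show n - 2 * (j : ℤ) = n + 1 - 1 - 2 * (j : ℤ) by omega)).comp
            ((M.tau (n - 2 * (j : ℤ)) - LinearMap.id).comp
              ((LinearMap.proj j).comp (LinearMap.fst k (FixT M n) (FixT M (n - 1))))))

/-- Cast along an equality of degrees for `X[[t]]`. -/
def fcast (M : CircleModule k p) {m n : ℤ} (h : m = n) : FixT M m →ₗ[k] FixT M n := by
  subst h; exact LinearMap.id

/-- Cast along an equality of degrees for `X[[t,θ]]`. -/
def fixThetaCast (M : CircleModule k p) {m n : ℤ} (h : m = n) :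
    FixTheta M m →ₗ[k] FixTheta M n := by
  subst h; exact LinearMap.id

/-- Cast along an equality of degrees for `X[[t]]⟨1,θ⟩`. -/
def fixShiftCast (M : CircleModule k p) {m n : ℤ} (h : m = n) :
    FixShift M m →ₗ[k] FixShift M n := by
  subst h; exact LinearMap.id

/-- The differential of `X[[t]]⟨1,θ⟩`, acting as the differential of `X[[t]]` on each of the
two summands (transported along the degree shift on the `θ`-summand). -/
def fixShiftDiff (M : CircleModule k p) (n : ℤ) : FixShift M n →ₗ[k] FixShift M (n + 1) :=
  LinearMap.prodMap (fixTDiff M n)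
    ((fcast M (show n - 1 + 1 = n + 1 - 1 by omega)).comp (fixTDiff M (n - 1)))

/-- The `ℤ/p`-Gysin comparison map `φ_p : X[[t]]⟨1,θ⟩ → X[[t,θ]]`, the `k[[t]]`-linear map
determined on homogeneous `x ∈ X` by `φ_p(x) = x + (-1)^{|x|} σ(x)·θ` and
`φ_p(x·θ) = x·θ + (-1)^{|x|} (τ - 1)^{p-2}(σ(x))·t`. -/
def gysinFix (M : CircleModule k p) (n : ℤ) : FixShift M n →ₗ[k] FixTheta M n :=
  LinearMap.prod
    (LinearMap.pi fun j =>
      (LinearMap.proj j).comp (LinearMap.fst k (FixT M n) (FixT M (n - 1)))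
      + if h : j = 0 then 0 else
          sgn k (n + 1) •
            (gcast M.X
                (show n - 1 - 2 * ((j - 1 : ℕ) : ℤ) - 1 = n - 2 * (j : ℤ) by omega)).comp
              ((tauSubOnePow M (n - 1 - 2 * ((j - 1 : ℕ) : ℤ) - 1) (p - 2)).comp
                ((M.sigma (n - 1 - 2 * ((j - 1 : ℕ) : ℤ))).comp
                  ((LinearMap.proj (j - 1)).comp
                    (LinearMap.snd k (FixT M n) (FixT M (n - 1)))))))
    (LinearMap.pi fun j =>
      (LinearMap.proj j).comp (LinearMap.snd k (FixT M n) (FixT M (n - 1)))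
      + sgn k n •
          (gcast M.X (show n - 2 * (j : ℤ) - 1 = n - 1 - 2 * (j : ℤ) by omega)).comp
            ((M.sigma (n - 2 * (j : ℤ))).comp
              ((LinearMap.proj j).comp (LinearMap.fst k (FixT M n) (FixT M (n - 1))))))

/-- Degree-`n` cohomology of the complex `X[[t,θ]]`: cocycles modulo coboundaries. -/
abbrev HFixTheta (M : CircleModule k p) (n : ℤ) : Type :=
  ↥(LinearMap.ker (fixThetaDiff M n)) ⧸
    Submodule.comap (LinearMap.ker (fixThetaDiff M n)).subtype
      (LinearMap.range
        ((fixThetaCast M (show n - 1 + 1 = n by omega)).comp (fixThetaDiff M (n - 1))))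

/-- Degree-`n` cohomology of the complex `X[[t]]`: cocycles modulo coboundaries. -/
abbrev HFixT (M : CircleModule k p) (n : ℤ) : Type :=
  ↥(LinearMap.ker (fixTDiff M n)) ⧸
    Submodule.comap (LinearMap.ker (fixTDiff M n)).subtype
      (LinearMap.range
        ((fcast M (show n - 1 + 1 = n by omega)).comp (fixTDiff M (n - 1))))


/-! ### Auxiliary infrastructure -/

section Aux

variable {A₀ A₁ A₂ B₀ B₁ B₂ M N : Type} [AddCommGroup A₀] [Module k A₀]
  [AddCommGroup A₁] [Module k A₁] [AddCommGroup A₂] [Module k A₂]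
  [AddCommGroup B₀] [Module k B₀] [AddCommGroup B₁] [Module k B₁]
  [AddCommGroup B₂] [Module k B₂] [AddCommGroup M] [Module k M]
  [AddCommGroup N] [Module k N]

/-- Cohomology is invariant under isomorphism of (three-term) complexes. -/
noncomputable def cohomCongr (f' : A₀ →ₗ[k] A₁) (f : A₁ →ₗ[k] A₂)
    (g' : B₀ →ₗ[k] B₁) (g : B₁ →ₗ[k] B₂)
    (e₀ : A₀ ≃ₗ[k] B₀) (e₁ : A₁ ≃ₗ[k] B₁) (e₂ : A₂ ≃ₗ[k] B₂)
    (h' : ∀ a, g' (e₀ a) = e₁ (f' a)) (h : ∀ a, g (e₁ a) = e₂ (f a)) :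
    (↥(LinearMap.ker f) ⧸ Submodule.comap (LinearMap.ker f).subtype (LinearMap.range f'))
      ≃ₗ[k]
    (↥(LinearMap.ker g) ⧸ Submodule.comap (LinearMap.ker g).subtype (LinearMap.range g')) := by
  have hker : (LinearMap.ker f).map (e₁ : A₁ →ₗ[k] B₁) = LinearMap.ker g := by
    ext b
    simp only [Submodule.mem_map, LinearMap.mem_ker]
    constructor
    · rintro ⟨a, ha, rfl⟩
      rw [LinearEquiv.coe_coe, h a, ha, map_zero]
    · intro hb
      refine ⟨e₁.symm b, ?_, by simp⟩
      have h2 : g (e₁ (e₁.symm b)) = e₂ (f (e₁.symm b)) := h _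
      rw [e₁.apply_symm_apply, hb] at h2
      exact (map_eq_zero_iff _ e₂.injective).mp h2.symm
  let E : ↥(LinearMap.ker f) ≃ₗ[k] ↥(LinearMap.ker g) :=
    (e₁.submoduleMap (LinearMap.ker f)).trans (LinearEquiv.ofEq _ _ hker)
  refine Submodule.Quotient.equiv _ _ E ?_
  ext ⟨b, hb⟩
  simp only [Submodule.mem_map, Submodule.mem_comap, Submodule.subtype_apply,
    LinearMap.mem_range]
  constructor
  · rintro ⟨⟨a, ha⟩, ⟨a₀, ha₀⟩, hEq⟩
    refine ⟨e₀ a₀, ?_⟩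
    have hb' : e₁ a = b := congrArg Subtype.val hEq
    rw [h' a₀, ha₀, hb']
  · rintro ⟨b₀, hb₀⟩
    have hmem : e₁.symm b ∈ LinearMap.ker f := by
      rw [← hker] at hb
      rcases hb with ⟨a, ha, hab⟩
      have : a = e₁.symm b := by
        apply e₁.injective; simpa using hab
      rwa [← this]
    refine ⟨⟨e₁.symm b, hmem⟩, ⟨e₀.symm b₀, ?_⟩, ?_⟩
    · apply e₁.injective
      rw [← h' (e₀.symm b₀), e₀.apply_symm_apply, hb₀, e₁.apply_symm_apply]
    · apply Subtype.ext
      have : (E ⟨e₁.symm b, hmem⟩ : B₁) = e₁ (e₁.symm b) := rfl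
      exact this.trans (e₁.apply_symm_apply b)

/-- The submodule `P.prod Q` is isomorphic to `P × Q`. -/
def prodSubEquiv (P : Submodule k M) (Q : Submodule k N) :
    ↥(P.prod Q) ≃ₗ[k] ↥P × ↥Q where
  toFun z := (⟨z.1.1, z.2.1⟩, ⟨z.1.2, z.2.2⟩)
  invFun w := ⟨(w.1.1, w.2.1), ⟨w.1.2, w.2.2⟩⟩
  map_add' := by intros; rfl
  map_smul' := by intros; rfl
  left_inv := by intro z; rfl
  right_inv := by intro w; rfl

/-- The quotient of a product by a product of submodules is the product of quotients. -/
noncomputable def quotProdEquiv (P : Submodule k M) (Q : Submodule k N) :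
    ((M × N) ⧸ P.prod Q) ≃ₗ[k] (M ⧸ P) × (N ⧸ Q) := by
  have hker : LinearMap.ker (P.mkQ.prodMap Q.mkQ) = P.prod Q := by
    rw [LinearMap.ker_prodMap, Submodule.ker_mkQ, Submodule.ker_mkQ]
  refine (Submodule.quotEquivOfEq _ _ hker.symm).trans
    ((P.mkQ.prodMap Q.mkQ).quotKerEquivOfSurjective ?_)
  intro z
  obtain ⟨a, ha⟩ := P.mkQ_surjective z.1
  obtain ⟨b, hb⟩ := Q.mkQ_surjective z.2
  exact ⟨(a, b), by simp [ha, hb]⟩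

/-- Cohomology of a product complex splits. -/
noncomputable def cohomProd (f' : A₀ →ₗ[k] A₁) (f : A₁ →ₗ[k] A₂)
    (g' : B₀ →ₗ[k] B₁) (g : B₁ →ₗ[k] B₂) :
    (↥(LinearMap.ker (f.prodMap g)) ⧸
      Submodule.comap (LinearMap.ker (f.prodMap g)).subtype
        (LinearMap.range (f'.prodMap g')))
      ≃ₗ[k]
    ((↥(LinearMap.ker f) ⧸ Submodule.comap (LinearMap.ker f).subtype (LinearMap.range f')) ×
     (↥(LinearMap.ker g) ⧸ Submodule.comap (LinearMap.ker g).subtype (LinearMap.range g'))) := by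
  let E : ↥(LinearMap.ker (f.prodMap g)) ≃ₗ[k] ↥(LinearMap.ker f) × ↥(LinearMap.ker g) :=
    (LinearEquiv.ofEq _ _ (LinearMap.ker_prodMap f g)).trans (prodSubEquiv _ _)
  refine (Submodule.Quotient.equiv _
      ((Submodule.comap (LinearMap.ker f).subtype (LinearMap.range f')).prod
        (Submodule.comap (LinearMap.ker g).subtype (LinearMap.range g'))) E ?_).trans
    (quotProdEquiv _ _)
  ext ⟨⟨a, ha⟩, ⟨b, hb⟩⟩
  simp only [Submodule.mem_map, Submodule.mem_prod, Submodule.mem_comap,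
    Submodule.subtype_apply, LinearMap.mem_range]
  constructor
  · rintro ⟨⟨z, hz⟩, ⟨w, hw⟩, hEz⟩
    have h1 : z.1 = a ∧ z.2 = b := by
      have := congrArg (fun t => ((t.1 : A₁), (t.2 : B₁))) hEz
      exact ⟨congrArg Prod.fst this, congrArg Prod.snd this⟩
    constructor
    · exact ⟨w.1, by rw [show f' w.1 = (f'.prodMap g' w).1 from rfl, hw, h1.1]⟩
    · exact ⟨w.2, by rw [show g' w.2 = (f'.prodMap g' w).2 from rfl, hw, h1.2]⟩
  · rintro ⟨⟨wa, hwa⟩, ⟨wb, hwb⟩⟩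
    have hz : (a, b) ∈ LinearMap.ker (f.prodMap g) := by
      have : f a = 0 := ha
      have : g b = 0 := hb
      simp only [LinearMap.mem_ker, LinearMap.prodMap_apply, Prod.mk_eq_zero]
      exact ⟨ha, hb⟩
    exact ⟨⟨(a, b), hz⟩, ⟨(wa, wb), by
      simp only [LinearMap.prodMap_apply, hwa, hwb]⟩, rfl⟩

end Aux

/-! ### Cast and commutation lemmas -/

section Alg

@[simp] lemma gcast_rfl_apply (X : ℤ → ModuleCat k) {a : ℤ} (x : X a) :
    gcast X rfl x = x := rfl

@[simp] lemma gcast_gcast (X : ℤ → ModuleCat k) {a b c : ℤ} (h1 : a = b) (h2 : b = c)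
    (x : X a) : gcast X h2 (gcast X h1 x) = gcast X (h1.trans h2) x := by
  subst h1; subst h2; rfl

variable (M : CircleModule k p)

@[simp] lemma d_gcast {a b : ℤ} (h : a = b) (x : M.X a) :
    M.d b (gcast M.X h x) = gcast M.X (congrArg (· + 1) h) (M.d a x) := by
  subst h; rfl

@[simp] lemma sigma_gcast {a b : ℤ} (h : a = b) (x : M.X a) :
    M.sigma b (gcast M.X h x) = gcast M.X (congrArg (· - 1) h) (M.sigma a x) := by
  subst h; rfl

@[simp] lemma tau_gcast {a b : ℤ} (h : a = b) (x : M.X a) :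
    M.tau b (gcast M.X h x) = gcast M.X h (M.tau a x) := by
  subst h; rfl

@[simp] lemma tp_gcast (m : ℕ) {a b : ℤ} (h : a = b) (x : M.X a) :
    tauSubOnePow M b m (gcast M.X h x) = gcast M.X h (tauSubOnePow M a m x) := by
  subst h; rfl

@[simp] lemma nop_gcast {a b : ℤ} (h : a = b) (x : M.X a) :
    Nop M b (gcast M.X h x) = gcast M.X h (Nop M a x) := by
  subst h; rfl

lemma d_tau_apply (a : ℤ) (x : M.X a) :
    M.d a (M.tau a x) = M.tau (a + 1) (M.d a x) :=
  LinearMap.ext_iff.mp (M.d_comm_tau a) x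

lemma sigma_tau_apply (a : ℤ) (x : M.X a) :
    M.sigma a (M.tau a x) = M.tau (a - 1) (M.sigma a x) :=
  LinearMap.ext_iff.mp (M.sigma_comm_tau a) x

@[simp] lemma sigma_sigma_apply (a : ℤ) (x : M.X a) :
    M.sigma (a - 1) (M.sigma a x) = 0 :=
  LinearMap.ext_iff.mp (M.sigma_comp_sigma a) x

@[simp] lemma tp_zero (a : ℤ) (x : M.X a) : tauSubOnePow M a 0 x = x := by
  simp [tauSubOnePow]

lemma tp_succ (a : ℤ) (m : ℕ) (x : M.X a) :
    tauSubOnePow M a (m + 1) x = tauSubOnePow M a m (M.tau a x - x) := by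
  simp only [tauSubOnePow, pow_succ, Module.End.mul_apply]
  congr 1

/-- Move `(τ-1)^m` past `d`. -/
@[simp] lemma tp_d (m : ℕ) (a : ℤ) (x : M.X a) :
    tauSubOnePow M (a + 1) m (M.d a x) = M.d a (tauSubOnePow M a m x) := by
  induction m generalizing x with
  | zero => simp
  | succ m ih =>
    rw [tp_succ, tp_succ, ← d_tau_apply, ← map_sub, ih]

/-- Move `(τ-1)^m` past `σ`. -/
@[simp] lemma sigma_tp (m : ℕ) (a : ℤ) (x : M.X a) :
    M.sigma a (tauSubOnePow M a m x) = tauSubOnePow M (a - 1) m (M.sigma a x) := by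
  induction m generalizing x with
  | zero => simp
  | succ m ih =>
    rw [tp_succ, tp_succ, ih, map_sub, sigma_tau_apply, map_sub]

/-- `(τ-1)^m ∘ τ = (τ-1)^(m+1) + (τ-1)^m`. -/
@[simp] lemma tp_tau (m : ℕ) (a : ℤ) (x : M.X a) :
    tauSubOnePow M a m (M.tau a x) = tauSubOnePow M a (m + 1) x + tauSubOnePow M a m x := by
  rw [tp_succ, ← map_add]
  congr 1
  abel

@[simp] lemma tau_tp (m : ℕ) (a : ℤ) (x : M.X a) :
    M.tau a (tauSubOnePow M a m x) = tauSubOnePow M a (m + 1) x + tauSubOnePow M a m x := by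
  have h : ∀ w : M.X a, M.tau a (tauSubOnePow M a m w) = tauSubOnePow M a m (M.tau a w) := by
    intro w
    simp only [tauSubOnePow]
    have hc : Commute (M.tau a : Module.End k (M.X a)) (M.tau a - 1 : Module.End k (M.X a)) :=
      Commute.sub_right (Commute.refl _) (Commute.one_right _)
    have : (M.tau a : Module.End k (M.X a)) * (M.tau a - 1) ^ m
        = ((M.tau a - 1 : Module.End k (M.X a)) ^ m) * (M.tau a : Module.End k (M.X a)) :=
      (hc.pow_right m).eq
    calc M.tau a (((M.tau a - 1 : Module.End k (M.X a)) ^ m) w)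
        = ((M.tau a : Module.End k (M.X a)) * (M.tau a - 1) ^ m) w := rfl
      _ = (((M.tau a - 1 : Module.End k (M.X a)) ^ m) * (M.tau a : Module.End k (M.X a))) w := by
          rw [this]
      _ = _ := rfl
  rw [h, tp_tau]

lemma gcast_eq_iff (X : ℤ → ModuleCat k) {m n : ℤ} (h : m = n) (x : X m) (y : X n) :
    gcast X h x = y ↔ x = gcast X h.symm y := by subst h; exact Iff.rfl

/-- The homotopy relation, solved for `σ ∘ d`. -/
lemma sigma_d (a : ℤ) (x : M.X a) :
    M.sigma (a + 1) (M.d a x)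
      = gcast M.X (show a = a + 1 - 1 by omega)
          (M.tau a x - x - gcast M.X (show a - 1 + 1 = a by omega) (M.d (a - 1) (M.sigma a x))) := by
  have h := LinearMap.ext_iff.mp (M.d_sigma_homotopy a) x
  simp only [LinearMap.add_apply, LinearMap.comp_apply, LinearMap.sub_apply,
    LinearMap.id_apply] at h
  have h2 : gcast M.X (show a + 1 - 1 = a by omega) (M.sigma (a + 1) (M.d a x))
      = M.tau a x - x
        - gcast M.X (show a - 1 + 1 = a by omega) (M.d (a - 1) (M.sigma a x)) := by
    rw [← h]; abel
  exact (gcast_eq_iff _ _ _ _).mp h2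

/-- In characteristic `p`, the norm equals `(τ-1)^(p-1)`. -/
lemma nop_eq_tp (hp : p.Prime) [CharP k p] (a : ℤ) :
    Nop M a = tauSubOnePow M a (p - 1) := by
  haveI : Fact p.Prime := ⟨hp⟩
  have hpoly : (∑ i ∈ Finset.range p, (Polynomial.X : Polynomial k) ^ i)
      = (Polynomial.X - 1 : Polynomial k) ^ (p - 1) := by
    have h1 : ((Polynomial.X - 1 : Polynomial k)) ^ (p - 1) * (Polynomial.X - 1)
        = (∑ i ∈ Finset.range p, (Polynomial.X : Polynomial k) ^ i) * (Polynomial.X - 1) := by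
      rw [geom_sum_mul, ← pow_succ, show p - 1 + 1 = p from Nat.succ_pred_eq_of_pos hp.pos,
        sub_pow_char, one_pow]
    have hne : (Polynomial.X - 1 : Polynomial k) ≠ 0 := by
      intro h
      have := congrArg (Polynomial.coeff · 1) h
      simp [Polynomial.coeff_X_one, Polynomial.coeff_one] at this
    exact (mul_right_cancel₀ hne h1).symm
  have := congrArg (Polynomial.aeval (M.tau a : Module.End k (M.X a))) hpoly
  simp only [map_sum, map_pow, map_sub, Polynomial.aeval_X, map_one] at this
  simpa [Nop, tauSubOnePow] using this

@[simp] lemma sgn_add_one (n : ℤ) : sgn k (n + 1) = - sgn k n := by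
  by_cases h : Even n
  · simp [sgn, h, Int.even_add_one, h]
  · simp [sgn, h, Int.even_add_one]

@[simp] lemma sgn_mul_self (n : ℤ) : sgn k n * sgn k n = 1 := by
  by_cases h : Even n <;> simp [sgn, h]

lemma fcast_apply (M : CircleModule k p) {m n : ℤ} (h : m = n) (w : FixT M m) (j : ℕ) :
    fcast M h w j = gcast M.X (by rw [h]) (w j) := by
  subst h; rfl

end Alg

/-! ### The corrected Gysin chain map -/

@[simp] lemma dite_lm_apply {c : Prop} [Decidable c] {V W : Type} [AddCommGroup V]
    [Module k V] [AddCommGroup W] [Module k W] (f : c → (V →ₗ[k] W))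
    (g : ¬c → (V →ₗ[k] W)) (v : V) :
    (dite c f g) v = dite c (fun h => f h v) (fun h => g h v) := by
  by_cases h : c <;> simp [h]

/-- The sign-corrected `ℤ/p`-Gysin comparison map (a chain map `X[[t]]⟨1,θ⟩ → X[[t,θ]]`). -/
def phi (M : CircleModule k p) (n : ℤ) : FixShift M n →ₗ[k] FixTheta M n :=
  LinearMap.prod
    (LinearMap.pi fun j =>
      (LinearMap.proj j).comp (LinearMap.fst k (FixT M n) (FixT M (n - 1)))
      + if h : j = 0 then 0 else
          sgn k n •
            (gcast M.X
                (show n - 1 - 2 * ((j - 1 : ℕ) : ℤ) - 1 = n - 2 * (j : ℤ) by omega)).comp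
              ((tauSubOnePow M (n - 1 - 2 * ((j - 1 : ℕ) : ℤ) - 1) (p - 2)).comp
                ((M.sigma (n - 1 - 2 * ((j - 1 : ℕ) : ℤ))).comp
                  ((LinearMap.proj (j - 1)).comp
                    (LinearMap.snd k (FixT M n) (FixT M (n - 1)))))))
    (LinearMap.pi fun j =>
      (LinearMap.proj j).comp (LinearMap.snd k (FixT M n) (FixT M (n - 1)))
      + sgn k (n + 1) •
          (gcast M.X (show n - 2 * (j : ℤ) - 1 = n - 1 - 2 * (j : ℤ) by omega)).comp
            ((M.sigma (n - 2 * (j : ℤ))).comp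
              ((LinearMap.proj j).comp (LinearMap.fst k (FixT M n) (FixT M (n - 1))))))

lemma phi_gysin (M : CircleModule k p) (n : ℤ) (z : FixShift M n) :
    phi M n (gysinFix M n z) = z := by
  obtain ⟨x, y⟩ := z
  apply Prod.ext <;> funext j <;> rcases j with _ | m <;>
    simp only [phi, gysinFix, LinearMap.prod_apply, LinearMap.add_apply, LinearMap.comp_apply,
      LinearMap.pi_apply, LinearMap.proj_apply, LinearMap.fst_apply, LinearMap.snd_apply,
      LinearMap.smul_apply, LinearMap.zero_apply, dite_lm_apply, reduceDIte, dif_pos, dif_neg,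
      Nat.succ_ne_zero, Nat.add_sub_cancel, apply_dite, map_add, map_sub, map_smul, map_zero, map_neg, neg_zero,
      gcast_gcast, sigma_gcast, tau_gcast, tp_gcast, d_gcast, nop_gcast, sigma_sigma_apply,
      sigma_tp, smul_smul, sgn_mul_self, sgn_add_one, one_smul, neg_smul, smul_neg, neg_neg,
      smul_zero, add_zero, zero_add, dite_eq_ite, ite_self, LinearMap.neg_apply, Function.prod,
      neg_add_cancel_right, add_neg_cancel_right, add_neg_cancel, neg_add_cancel, add_assoc]

lemma gysin_phi (M : CircleModule k p) (n : ℤ) (z : FixShift M n) :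
    gysinFix M n (phi M n z) = z := by
  obtain ⟨x, y⟩ := z
  apply Prod.ext <;> funext j <;> rcases j with _ | m <;>
    simp only [phi, gysinFix, LinearMap.prod_apply, LinearMap.add_apply, LinearMap.comp_apply,
      LinearMap.pi_apply, LinearMap.proj_apply, LinearMap.fst_apply, LinearMap.snd_apply,
      LinearMap.smul_apply, LinearMap.zero_apply, dite_lm_apply, reduceDIte, dif_pos, dif_neg,
      Nat.succ_ne_zero, Nat.add_sub_cancel, apply_dite, map_add, map_sub, map_smul, map_zero, map_neg, neg_zero,
      gcast_gcast, sigma_gcast, tau_gcast, tp_gcast, d_gcast, nop_gcast, sigma_sigma_apply,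
      sigma_tp, smul_smul, sgn_mul_self, sgn_add_one, one_smul, neg_smul, smul_neg, neg_neg,
      smul_zero, add_zero, zero_add, dite_eq_ite, ite_self, LinearMap.neg_apply, Function.prod,
      neg_add_cancel_right, add_neg_cancel_right, add_neg_cancel, neg_add_cancel, add_assoc]

/-- `phi` as a linear equivalence. -/
def phiEquiv (M : CircleModule k p) (n : ℤ) : FixShift M n ≃ₗ[k] FixTheta M n :=
  LinearEquiv.ofLinear (phi M n) (gysinFix M n)
    (LinearMap.ext fun z => phi_gysin M n z)
    (LinearMap.ext fun z => gysin_phi M n z)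

set_option maxHeartbeats 2000000 in
lemma phi_chain (hp : p.Prime) [CharP k p] (M : CircleModule k p) (n : ℤ)
    (z : FixShift M n) :
    fixThetaDiff M n (phi M n z) = phi M (n + 1) (fixShiftDiff M n z) := by
  obtain ⟨x, y⟩ := z
  have hp2 : 2 ≤ p := hp.two_le
  have hp21 : p - 2 + 1 = p - 1 := by omega
  apply Prod.ext <;> funext j <;> rcases j with _ | m <;>
    simp only [phi, fixThetaDiff, fixShiftDiff, fixTDiff, nop_eq_tp M hp, fcast_apply,
      LinearMap.prod_apply, LinearMap.prodMap_apply, LinearMap.add_apply, LinearMap.comp_apply,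
      LinearMap.pi_apply, LinearMap.proj_apply, LinearMap.fst_apply, LinearMap.snd_apply,
      LinearMap.smul_apply, LinearMap.zero_apply, LinearMap.sub_apply, LinearMap.id_apply,
      dite_lm_apply, reduceDIte, dif_pos, dif_neg, Nat.succ_ne_zero, Nat.add_sub_cancel,
      apply_dite, map_add, map_sub, map_smul, map_zero, map_neg, neg_zero,
      gcast_gcast, sigma_gcast, tau_gcast, tp_gcast, d_gcast, nop_gcast, sigma_sigma_apply,
      sigma_tp, tp_d, tp_tau, tau_tp, sigma_d, hp21,
      smul_smul, sgn_mul_self, sgn_add_one, one_smul, neg_smul, smul_neg, neg_neg,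
      smul_zero, add_zero, zero_add, smul_add, smul_sub, dite_eq_ite, ite_self,
      LinearMap.neg_apply, Function.prod,
      neg_add_cancel_right, add_neg_cancel_right, add_neg_cancel, neg_add_cancel] <;>
    abel

/-! ### Assembly -/

lemma fcast_fcast (M : CircleModule k p) {a b c : ℤ} (h1 : a = b) (h2 : b = c) (w : FixT M a) :
    fcast M h2 (fcast M h1 w) = fcast M (h1.trans h2) w := by subst h1; subst h2; rfl

/-- `fcast` as an equivalence. -/
def fcastEquiv (M : CircleModule k p) {m n : ℤ} (h : m = n) : FixT M m ≃ₗ[k] FixT M n := by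
  subst h; exact LinearEquiv.refl k _

@[simp] lemma fcastEquiv_apply (M : CircleModule k p) {m n : ℤ} (h : m = n) (w : FixT M m) :
    fcastEquiv M h w = fcast M h w := by subst h; rfl

@[simp] lemma fcastEquiv_symm_apply (M : CircleModule k p) {m n : ℤ} (h : m = n)
    (w : FixT M n) : (fcastEquiv M h).symm w = fcast M h.symm w := by subst h; rfl

lemma fixShiftCast_apply (M : CircleModule k p) {m n : ℤ} (h : m = n) (z : FixShift M m) :
    fixShiftCast M h z = (fcast M h z.1, fcast M (congrArg (· - 1) h) z.2) := by
  subst h; rfl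

lemma phi_cast (M : CircleModule k p) {m n : ℤ} (h : m = n) (w : FixShift M m) :
    fixThetaCast M h (phi M m w) = phi M n (fixShiftCast M h w) := by
  subst h; rfl

theorem hFixTheta_split' (hp : p.Prime) [CharP k p]
    (M : CircleModule k p) (n : ℤ) :
    Nonempty (HFixTheta M n ≃ₗ[k] HFixT M n × HFixT M (n - 1)) := by
  -- Step A : shift-complex cohomology ≃ theta-complex cohomology, via `phi`
  have stepA :
      (↥(LinearMap.ker (fixShiftDiff M n)) ⧸
        Submodule.comap (LinearMap.ker (fixShiftDiff M n)).subtype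
          (LinearMap.range
            ((fixShiftCast M (show n - 1 + 1 = n by omega)).comp (fixShiftDiff M (n - 1)))))
        ≃ₗ[k] HFixTheta M n := by
    refine cohomCongr _ _ _ _ (phiEquiv M (n - 1)) (phiEquiv M n) (phiEquiv M (n + 1))
      (fun a => ?_) (fun a => phi_chain hp M n a)
    show fixThetaCast M _ (fixThetaDiff M (n - 1) (phi M (n - 1) a))
        = phi M n (fixShiftCast M _ (fixShiftDiff M (n - 1) a))
    rw [phi_chain hp M (n - 1) a, phi_cast]
  -- Step B : rewrite the shift complex with prodMap differentials
  have stepB :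
      (↥(LinearMap.ker
          ((fixTDiff M n).prodMap
            ((fcast M (show n - 1 + 1 = n + 1 - 1 by omega)).comp (fixTDiff M (n - 1))))) ⧸
        Submodule.comap (LinearMap.ker
            ((fixTDiff M n).prodMap
              ((fcast M (show n - 1 + 1 = n + 1 - 1 by omega)).comp
                (fixTDiff M (n - 1))))).subtype
          (LinearMap.range
            (((fcast M (show n - 1 + 1 = n by omega)).comp (fixTDiff M (n - 1))).prodMap
              ((fcast M (show n - 1 - 1 + 1 = n - 1 by omega)).comp
                (fixTDiff M (n - 1 - 1))))))
        ≃ₗ[k]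
      (↥(LinearMap.ker (fixShiftDiff M n)) ⧸
        Submodule.comap (LinearMap.ker (fixShiftDiff M n)).subtype
          (LinearMap.range
            ((fixShiftCast M (show n - 1 + 1 = n by omega)).comp (fixShiftDiff M (n - 1))))) := by
    refine cohomCongr _ _ _ _ (LinearEquiv.refl k _) (LinearEquiv.refl k _)
      (LinearEquiv.refl k _) (fun a => ?_) (fun a => rfl)
    show fixShiftCast M _ (fixShiftDiff M (n - 1) a) = _
    obtain ⟨u, v⟩ := a
    rw [fixShiftCast_apply]
    refine Prod.ext ?_ ?_ <;>
      simp only [fixShiftDiff, LinearMap.prodMap_apply, LinearMap.comp_apply,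
        LinearEquiv.refl_apply, fcast_fcast]
  -- Step C : split the product
  have stepC := cohomProd
    ((fcast M (show n - 1 + 1 = n by omega)).comp (fixTDiff M (n - 1))) (fixTDiff M n)
    ((fcast M (show n - 1 - 1 + 1 = n - 1 by omega)).comp (fixTDiff M (n - 1 - 1)))
    ((fcast M (show n - 1 + 1 = n + 1 - 1 by omega)).comp (fixTDiff M (n - 1)))
  -- Step D : the second factor is HFixT (n-1)
  have stepD :
      (↥(LinearMap.ker
          ((fcast M (show n - 1 + 1 = n + 1 - 1 by omega)).comp (fixTDiff M (n - 1)))) ⧸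
        Submodule.comap (LinearMap.ker
            ((fcast M (show n - 1 + 1 = n + 1 - 1 by omega)).comp
              (fixTDiff M (n - 1)))).subtype
          (LinearMap.range
            ((fcast M (show n - 1 - 1 + 1 = n - 1 by omega)).comp (fixTDiff M (n - 1 - 1)))))
        ≃ₗ[k] HFixT M (n - 1) := by
    refine cohomCongr _ _ _ _ (LinearEquiv.refl k _) (LinearEquiv.refl k _)
      (fcastEquiv M (show n - 1 + 1 = n + 1 - 1 by omega)).symm (fun a => rfl) (fun a => ?_)
    show fixTDiff M (n - 1) a = (fcastEquiv M _).symm (fcast M _ (fixTDiff M (n - 1) a))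
    rw [fcastEquiv_symm_apply, fcast_fcast]
    rfl
  have e1 := LinearEquiv.symm stepA
  have e2 := LinearEquiv.symm stepB
  have e3 := LinearEquiv.prodCongr (LinearEquiv.refl k (HFixT M n)) stepD
  exact ⟨LinearEquiv.trans e1 (LinearEquiv.trans e2 (LinearEquiv.trans stepC e3))⟩
/-- For any circle-module `X` over a field `k` of odd prime characteristic `p`
and every integer `n`, there is an isomorphism of `k`-vector spaces
`H^n(X[[t,θ]]) ≅ H^n(X[[t]]) ⊕ H^{n-1}(X[[t]])` (the mod-`p` `ℤ/p`-Gysin decomposition). -/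
theorem hFixTheta_split (hp : p.Prime) (hodd : Odd p) [CharP k p]
    (M : CircleModule k p) (n : ℤ) :
    Nonempty (HFixTheta M n ≃ₗ[k] HFixT M n × HFixT M (n - 1)) := by
  exact hFixTheta_split' hp M n
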